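/- For every integer r ≥ 2 and every θ ∈ [0, π/r], it holds that 1 − sin²(π/(2r)) + sin²(π/(2r))·cos(rθ) ≤ cos(θ). -/

import Mathlib

open Real

lemma key (c : ℝ) (hc : 1 ≤ c) (t : ℝ) (ht0 : 0 ≤ t) (ht1 : t ≤ π / 2) :
    sin (t / c) ≤ sin (π / (2 * c)) * sin t := by
  have hc0 : 0 < c := lt_of_lt_of_le one_pos hc
  have hπ : 0 < π := pi_pos
  set s : ℝ := sin (π / (2 * c)) with hs
  set g : ℝ → ℝ := fun x => s * sin x - sin (x / c) with hg
  have hd1 : ∀ x : ℝ, HasDerivAt g (s * cos x - cos (x / c) * (1 / c)) x := by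
    intro x
    have h1 : HasDerivAt (fun x : ℝ => sin (x / c)) (cos (x / c) * (1 / c)) x := by
      have := (Real.hasDerivAt_sin (x / c)).comp x ((hasDerivAt_id x).div_const c)
      simpa [Function.comp_def] using this
    exact ((Real.hasDerivAt_sin x).const_mul s).sub h1
  have hderiv : deriv g = fun x => s * cos x - cos (x / c) * (1 / c) := by
    funext x; exact (hd1 x).deriv
  have hd2 : ∀ x : ℝ, HasDerivAt (deriv g) (-(s * sin x) + sin (x / c) * (1 / c) * (1 / c)) x := by
    intro x
    rw [hderiv]
    have h1 : HasDerivAt (fun x : ℝ => cos (x / c)) (-sin (x / c) * (1 / c)) x := by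
      have := (Real.hasDerivAt_cos (x / c)).comp x ((hasDerivAt_id x).div_const c)
      simpa [Function.comp_def] using this
    have := ((Real.hasDerivAt_cos x).const_mul s).sub (h1.mul_const (1 / c))
    exact this.congr_deriv (by ring)
  have hs_ge : 1 / c ≤ s := by
    have := Real.mul_le_sin (x := π / (2 * c)) (by positivity)
      (div_le_div_of_nonneg_left hπ.le two_pos (by linarith))
    calc 1 / c = 2 / π * (π / (2 * c)) := by field_simp
    _ ≤ s := this
  have hconc : ConcaveOn ℝ (Set.Icc 0 (π / 2)) g := by
    apply concaveOn_of_deriv2_nonpos (convex_Icc _ _)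
    · exact Continuous.continuousOn (by fun_prop)
    · intro x _; exact ((hd1 x).differentiableAt).differentiableWithinAt
    · intro x _; exact ((hd2 x).differentiableAt).differentiableWithinAt
    · intro x hx
      rw [interior_Icc] at hx
      have h2 : deriv^[2] g x = -(s * sin x) + sin (x / c) * (1 / c) * (1 / c) := by
        simp only [Function.iterate_succ, Function.iterate_zero, Function.comp_apply, id_eq]
        exact (hd2 x).deriv
      rw [h2]
      have hx0 := hx.1.le
      have hx2 := hx.2.le
      have hsinle : sin (x / c) ≤ sin x := by
        apply sin_le_sin_of_le_of_le_pi_div_two (by nlinarith [div_nonneg hx0 hc0.le]) hx2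
        calc x / c ≤ x / 1 := by apply div_le_div_of_nonneg_left hx0 one_pos hc
        _ = x := div_one x
      have hsin0 : 0 ≤ sin (x / c) := sin_nonneg_of_nonneg_of_le_pi (by positivity)
        (by nlinarith [div_le_self hx0 hc])
      have h1c : 0 < 1 / c := by positivity
      have h1c1 : 1 / c ≤ 1 := by rw [div_le_one hc0]; linarith
      have hsinx0 : 0 ≤ sin x := le_trans hsin0 hsinle
      have A : sin (x / c) * (1 / c) * (1 / c) ≤ sin x * (1 / c) * (1 / c) :=
        mul_le_mul_of_nonneg_right (mul_le_mul_of_nonneg_right hsinle h1c.le) h1c.le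
      have B : sin x * (1 / c) * (1 / c) ≤ sin x * (1 / c) := by
        have := mul_le_mul_of_nonneg_left h1c1 (mul_nonneg hsinx0 h1c.le)
        simpa [mul_assoc] using this
      have C : sin x * (1 / c) ≤ s * sin x := by
        rw [mul_comm]
        exact mul_le_mul_of_nonneg_right hs_ge hsinx0
      linarith
  have h0 : g 0 = 0 := by simp [hg]
  have hhalf : g (π / 2) = 0 := by
    simp only [hg]
    rw [Real.sin_pi_div_two, div_div]
    ring
  have hmem0 : (0 : ℝ) ∈ Set.Icc (0 : ℝ) (π / 2) := by constructor <;> [rfl; positivity]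
  have hmem1 : (π / 2) ∈ Set.Icc (0 : ℝ) (π / 2) := by
    constructor; · positivity
    · exact le_refl _
  have hb0 : (0:ℝ) ≤ 2 * t / π := by positivity
  have ha0 : (0:ℝ) ≤ 1 - 2 * t / π := by
    have : 2 * t / π ≤ 1 := by rw [div_le_one hπ]; linarith
    linarith
  have := hconc.2 hmem0 hmem1 ha0 hb0 (by ring)
  have heq : (1 - 2 * t / π) • (0:ℝ) + (2 * t / π) • (π / 2) = t := by
    rw [smul_eq_mul, smul_eq_mul]
    field_simp
    ring
  rw [heq] at this
  have : 0 ≤ g t := by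
    rw [h0, hhalf] at this; simpa using this
  simp only [hg] at this
  linarith

/-- For every integer `r ≥ 2` and `θ ∈ [0, π/r]`,
`1 − sin²(π/(2r)) + sin²(π/(2r))·cos(rθ) ≤ cos θ`. -/
theorem stmt2 (r : ℕ) (hr : 2 ≤ r) (θ : ℝ) (hθ0 : 0 ≤ θ) (hθ1 : θ ≤ π / r) :
    1 - sin (π / (2 * r)) ^ 2 + sin (π / (2 * r)) ^ 2 * cos (r * θ) ≤ cos θ := by
  have hr1 : (1 : ℝ) ≤ (r : ℝ) := by exact_mod_cast Nat.one_le_of_lt hr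
  have hrpos : (0 : ℝ) < r := by linarith
  have hrθ : (r : ℝ) * θ ≤ π := by
    nlinarith [(le_div_iff₀ hrpos).mp hθ1]
  set t : ℝ := r * θ / 2 with ht
  have ht0 : 0 ≤ t := by positivity
  have ht1 : t ≤ π / 2 := by rw [ht]; linarith
  have hkey := key r hr1 t ht0 ht1
  have htr : t / r = θ / 2 := by field_simp [ht]; ring
  rw [htr] at hkey
  have hsh0 : 0 ≤ sin (θ / 2) :=
    sin_nonneg_of_nonneg_of_le_pi (by positivity) (by nlinarith [pi_pos])
  have hrhs0 : 0 ≤ sin (π / (2 * r)) * sin t := le_trans hsh0 hkey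
  have hsq : sin (θ / 2) ^ 2 ≤ (sin (π / (2 * r)) * sin t) ^ 2 := by
    nlinarith
  have hcosθ : cos θ = 1 - 2 * sin (θ / 2) ^ 2 := by
    have h := Real.cos_two_mul (θ / 2)
    rw [show 2 * (θ / 2) = θ by ring] at h
    nlinarith [Real.sin_sq_add_cos_sq (θ / 2)]
  have hcosrθ : cos ((r : ℝ) * θ) = 1 - 2 * sin t ^ 2 := by
    have h := Real.cos_two_mul t
    rw [show 2 * t = (r : ℝ) * θ by rw [ht]; ring] at h
    nlinarith [Real.sin_sq_add_cos_sq t]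
  rw [hcosθ, hcosrθ]
  nlinarith [hsq]
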